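/- Let T be a Kock–Zöberlein monad on a poset-enriched category A (i.e., T is locally monotone and T(η_X) ≤ η_{TX}). For a map a : TX → X, the following are equivalent: (1) a is an Eilenberg–Moore algebra structure for T; (2) a is a left adjoint left inverse of the unit η_X : X → TX, i.e., a ∘ η_X = id and id_{TX} ≤ η_X ∘ a. -/
import Mathlib


open CategoryTheory

/-- For a Kock–Zöberlein monad `T` on a poset-enriched category `A` (homs are partially
ordered, composition is monotone, `T` is locally monotone, and `T(η_X) ≤ η_{TX}`),
a map `a : TX → X` is an Eilenberg–Moore algebra structure iff it is a
left-adjoint-left-inverse of the unit `η_X : X → TX`, i.e. `a ∘ η_X = id` and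
`id_{TX} ≤ η_X ∘ a`. -/
theorem bases_as_coalgebras_stmt10 {A : Type u} [Category.{v} A]
    [∀ X Y : A, PartialOrder (X ⟶ Y)]
    (comp_mono : ∀ {X Y Z : A} (f g : X ⟶ Y) (h k : Y ⟶ Z),
      f ≤ g → h ≤ k → f ≫ h ≤ g ≫ k)
    (T : Monad A)
    (T_mono : ∀ {X Y : A} (f g : X ⟶ Y), f ≤ g → T.map f ≤ T.map g)
    (KZ : ∀ X : A, T.map (T.η.app X) ≤ T.η.app (T.obj X))
    (X : A) (a : T.obj X ⟶ X) :
    (T.η.app X ≫ a = 𝟙 X ∧ T.map a ≫ a = T.μ.app X ≫ a) ↔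
    (T.η.app X ≫ a = 𝟙 X ∧ 𝟙 (T.obj X) ≤ a ≫ T.η.app X) := by
  have nat : a ≫ T.η.app X = T.η.app (T.obj X) ≫ T.map a := T.η.naturality a
  constructor
  · rintro ⟨hunit, _⟩
    refine ⟨hunit, ?_⟩
    calc 𝟙 (T.obj X) = T.map (T.η.app X ≫ a) := by rw [hunit]; simp
      _ = T.map (T.η.app X) ≫ T.map a := by simp
      _ ≤ T.η.app (T.obj X) ≫ T.map a := comp_mono _ _ _ _ (KZ X) le_rfl
      _ = a ≫ T.η.app X := nat.symm
  · rintro ⟨hunit, hadj⟩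
    refine ⟨hunit, ?_⟩
    -- μ ≤ T a
    have h1 : T.μ.app X ≤ T.map a := by
      have : 𝟙 (T.obj (T.obj X)) ≤ T.map a ≫ T.map (T.η.app X) := by
        calc 𝟙 (T.obj (T.obj X)) = T.map (𝟙 (T.obj X)) := by simp
          _ ≤ T.map (a ≫ T.η.app X) := T_mono _ _ hadj
          _ = T.map a ≫ T.map (T.η.app X) := by simp
      calc T.μ.app X = 𝟙 _ ≫ T.μ.app X := by simp
        _ ≤ (T.map a ≫ T.map (T.η.app X)) ≫ T.μ.app X :=
            comp_mono _ _ _ _ this le_rfl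
        _ = T.map a ≫ (T.map (T.η.app X) ≫ T.μ.app X) := by simp
        _ = T.map a := by rw [T.right_unit]; simp
    -- μ ⊣ η_{TX} : 𝟙 ≤ μ ≫ η_{TX}
    have h2 : 𝟙 (T.obj (T.obj X)) ≤ T.μ.app X ≫ T.η.app (T.obj X) := by
      have natμ : T.μ.app X ≫ T.η.app (T.obj X)
          = T.η.app (T.obj (T.obj X)) ≫ T.map (T.μ.app X) := T.η.naturality (T.μ.app X)
      calc 𝟙 (T.obj (T.obj X))
          = T.map (T.map (T.η.app X)) ≫ T.map (T.μ.app X) := by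
            rw [← T.map_comp, T.right_unit, T.map_id]; rfl
        _ ≤ T.map (T.η.app (T.obj X)) ≫ T.map (T.μ.app X) :=
            comp_mono _ _ _ _ (T_mono _ _ (KZ X)) le_rfl
        _ ≤ T.η.app (T.obj (T.obj X)) ≫ T.map (T.μ.app X) :=
            comp_mono _ _ _ _ (KZ (T.obj X)) le_rfl
        _ = T.μ.app X ≫ T.η.app (T.obj X) := natμ.symm
    -- T a ≤ μ ≫ a ≫ η
    have h3 : T.map a ≤ T.μ.app X ≫ (a ≫ T.η.app X) := by
      calc T.map a = 𝟙 _ ≫ T.map a := by simp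
        _ ≤ (T.μ.app X ≫ T.η.app (T.obj X)) ≫ T.map a := comp_mono _ _ _ _ h2 le_rfl
        _ = T.μ.app X ≫ (T.η.app (T.obj X) ≫ T.map a) := by simp
        _ = T.μ.app X ≫ (a ≫ T.η.app X) := by rw [← nat]
    apply le_antisymm
    · calc T.map a ≫ a ≤ (T.μ.app X ≫ (a ≫ T.η.app X)) ≫ a :=
            comp_mono _ _ _ _ h3 le_rfl
        _ = T.μ.app X ≫ a ≫ (T.η.app X ≫ a) := by simp
        _ = T.μ.app X ≫ a := by rw [hunit]; simp
    · exact comp_mono _ _ _ _ h1 le_rfl
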